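/- Let n ≥ 1, a ∈ ℝ^n, B ∈ ℝ^{n×n}, and M = [diag(a)|B] ∈ ℝ^{n×2n}. Then for every i ∈ {1,…,n}, (adj(B)·a)_i = (−1)^{i+1} · Σ_{j=1}^n p_{(j, S_i)}(M), where (j, S_i) is the ordered list consisting of j followed by the elements of {n+1,…,2n}∖{n+i} in increasing order, and adj(B) denotes the adjugate matrix of B. -/

import Mathlib

open Matrix

noncomputable section

/-- The `n × 2n` block matrix `[diag(a) | B]`. -/
def blockMat {n : ℕ} (a : Fin n → ℝ) (B : Matrix (Fin n) (Fin n) ℝ) :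
    Matrix (Fin n) (Fin (2 * n)) ℝ := fun i j =>
  if h : (j : ℕ) < n then (if (j : ℕ) = (i : ℕ) then a i else 0)
  else B i ⟨(j : ℕ) - n, by have := j.isLt; omega⟩

/-- For an ordered list `L` of column indices, `colMinor N L` is the determinant of the
`n × n` matrix whose `k`-th column is the `L k`-th column of `N`. -/
def colMinor {n : ℕ} (N : Matrix (Fin n) (Fin (2 * n)) ℝ) (L : Fin n → Fin (2 * n)) : ℝ :=
  (N.submatrix id L).det

/-- The ordered list `(j, S_i)` (0-based): the column `j` of the first block, followed by
the columns `{n, …, 2n-1} \ {n+i}` in increasing order. -/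
def listJS (n : ℕ) (i j : Fin n) : Fin n → Fin (2 * n) := fun k =>
  if (k : ℕ) = 0 then ⟨(j : ℕ), by have := j.isLt; omega⟩
  else if (k : ℕ) - 1 < (i : ℕ) then ⟨n + ((k : ℕ) - 1), by have := k.isLt; omega⟩
  else ⟨n + (k : ℕ), by have := k.isLt; omega⟩

/-- Each entry of `adj(B) · a` is a signed sum of maximal minors of `M = [diag(a) | B]`:
`(adj(B)·a)_i = (-1)^{i+1} Σ_j p_{(j, S_i)}(M)` (here stated 0-based, so the sign is
`(-1)^i`). -/
theorem adjugate_mulVec_eq_sum_minors (n : ℕ) (hn : 1 ≤ n) (a : Fin n → ℝ)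
    (B : Matrix (Fin n) (Fin n) ℝ) :
    ∀ i : Fin n,
      B.adjugate.mulVec a i =
        (-1 : ℝ) ^ (i : ℕ) * ∑ j : Fin n, colMinor (blockMat a B) (listJS n i j) := by
  intro i
  obtain ⟨m, rfl⟩ : ∃ m, n = m + 1 := ⟨n - 1, by omega⟩
  have hminor : ∀ j : Fin (m + 1),
      colMinor (blockMat a B) (listJS (m + 1) i j) =
        (-1 : ℝ) ^ (j : ℕ) * a j * det (B.submatrix j.succAbove i.succAbove) := by
    intro j
    rw [colMinor, det_succ_column_zero]
    rw [Fintype.sum_eq_single j]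
    · have h0 : ((blockMat a B).submatrix id (listJS (m + 1) i j)) j 0 = a j := by
        simp [blockMat, listJS, submatrix_apply, j.isLt]
      rw [h0]
      congr 2
      ext r k
      simp only [submatrix_apply, id_eq]
      rcases Nat.lt_or_ge (k : ℕ) (i : ℕ) with h | h
      · have hL : listJS (m + 1) i j k.succ = ⟨m + 1 + (k : ℕ), by omega⟩ := by
          simp only [listJS, Fin.val_succ]
          rw [if_neg (by omega), if_pos (by omega)]
          exact Fin.ext (by simp)
        have hA : i.succAbove k = k.castSucc := by
          rw [Fin.succAbove, if_pos]
          exact Fin.lt_def.mpr (by simpa using h)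
        rw [hL, hA]
        simp only [blockMat]
        rw [dif_neg (by simp; omega)]
        congr 1
        ext
        simp
      · have hL : listJS (m + 1) i j k.succ = ⟨m + 1 + ((k : ℕ) + 1), by omega⟩ := by
          simp only [listJS, Fin.val_succ]
          rw [if_neg (by omega), if_neg (by omega)]
        have hA : i.succAbove k = k.succ := by
          rw [Fin.succAbove, if_neg]
          exact fun hc => absurd (Fin.lt_def.mp hc) (by simpa using Nat.not_lt.mpr h)
        rw [hL, hA]
        simp only [blockMat]
        rw [dif_neg (by simp; omega)]
        congr 1
        ext
        simp
    · intro r hr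
      have h0 : ((blockMat a B).submatrix id (listJS (m + 1) i j)) r 0 = 0 := by
        have : (j : ℕ) ≠ (r : ℕ) := fun h => hr (Fin.ext h.symm)
        simp [blockMat, listJS, submatrix_apply, j.isLt, this]
      rw [h0, mul_zero, zero_mul]
  rw [mulVec, dotProduct, Finset.mul_sum]
  refine Finset.sum_congr rfl fun j _ => ?_
  rw [hminor j, adjugate_fin_succ_eq_det_submatrix, pow_add]
  ring

end
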